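/- For every complex λ ≠ 0 and real θ ≠ 0 with |sinh(θ/2)| < 1, sinh(λ θ)/(λ sinh θ) = F(1 + λ, 1 − λ; 3/2; −sinh²(θ/2)). -/

import Mathlib

lemma summ_aux (k : ℕ) {r : ℝ} (h0 : 0 ≤ r) (h1 : r < 1) :
    Summable fun n : ℕ => ((n : ℝ) + 1) ^ k * r ^ n := by
  rcases eq_or_lt_of_le h0 with h | h
  · apply summable_of_ne_finset_zero (s := {0})
    intro n hn
    simp only [Finset.mem_singleton] at hn
    rw [← h]
    simp [zero_pow, hn]
  · have W : Summable fun n : ℕ => (n : ℝ) ^ k * r ^ n := by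
      simpa using summable_pow_mul_geometric_of_norm_lt_one (R := ℝ) k (r := r) (by
        rwa [Real.norm_eq_abs, abs_of_nonneg h0])
    have W1 : Summable fun n : ℕ => ((n + 1 : ℕ) : ℝ) ^ k * r ^ (n + 1) :=
      (summable_nat_add_iff 1).2 W
    have := W1.mul_left (1 / r)
    refine this.congr fun n => ?_
    push_cast
    field_simp
    ring

-- summability of the series itself, from a polynomial bound on coefficients
lemma summ_coeff {b : ℕ → ℂ} {C : ℝ} {k : ℕ} (hb : ∀ n, ‖b n‖ ≤ C * ((n : ℝ) + 1) ^ k)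
    {z : ℂ} (hz : ‖z‖ < 1) : Summable fun n : ℕ => b n * z ^ n := by
  have hg : Summable fun n : ℕ => C * (((n : ℝ) + 1) ^ k * ‖z‖ ^ n) :=
    (summ_aux k (norm_nonneg z) hz).mul_left C
  refine Summable.of_norm_bounded hg fun n => ?_
  rw [norm_mul, norm_pow]
  calc ‖b n‖ * ‖z‖ ^ n ≤ (C * ((n : ℝ) + 1) ^ k) * ‖z‖ ^ n := by
        apply mul_le_mul_of_nonneg_right (hb n) (by positivity)
    _ = C * (((n : ℝ) + 1) ^ k * ‖z‖ ^ n) := by ring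

-- term-by-term derivative of a power series with polynomially bounded coefficients
lemma hasDerivAt_psum {b : ℕ → ℂ} {C : ℝ} {k : ℕ} (hC : 0 ≤ C)
    (hb : ∀ n, ‖b n‖ ≤ C * ((n : ℝ) + 1) ^ k)
    {z : ℂ} (hz : ‖z‖ < 1) :
    HasDerivAt (fun w : ℂ => ∑' n : ℕ, b n * w ^ n)
      (∑' n : ℕ, ((n : ℂ) + 1) * b (n + 1) * z ^ n) z := by
  set r : ℝ := (1 + ‖z‖) / 2 with hr
  have hr0 : (0:ℝ) < r := by positivity
  have hrhalf : (1:ℝ)/2 ≤ r := by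
    rw [hr]; nlinarith [norm_nonneg z]
  have hr1 : r < 1 := by rw [hr]; linarith
  have hzr : ‖z‖ < r := by rw [hr]; linarith
  have usum : Summable fun n : ℕ => 2 * C * ((n : ℝ) + 1) ^ (k + 1) * r ^ n :=
    ((summ_aux (k+1) hr0.le hr1).mul_left (2*C)).congr fun n => by ring
  have bound : ∀ (n : ℕ) (y : ℂ), ‖y‖ < r →
      ‖b n * ((n : ℂ) * y ^ (n - 1))‖ ≤ 2 * C * ((n : ℝ) + 1) ^ (k + 1) * r ^ n := by
    intro n y hy'
    rw [norm_mul, norm_mul, Complex.norm_natCast, norm_pow]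
    calc ‖b n‖ * ((n : ℝ) * ‖y‖ ^ (n - 1))
        ≤ (C * ((n:ℝ)+1) ^ k) * (((n:ℝ)+1) * r ^ (n-1)) := by
          apply mul_le_mul (hb n)
          · apply mul_le_mul (by linarith) (pow_le_pow_left₀ (norm_nonneg _) hy'.le _)
              (by positivity) (by linarith [Nat.cast_nonneg (α := ℝ) n])
          · positivity
          · positivity
      _ ≤ 2 * C * ((n : ℝ) + 1) ^ (k + 1) * r ^ n := by
          rcases n with _ | m
          · simp only [Nat.cast_zero, pow_zero, zero_add, one_pow, mul_one, one_mul,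
              Nat.zero_sub, pow_one]
            nlinarith [hr0.le, hr1]
          · have h2r : (1:ℝ) ≤ 2 * r := by linarith
            have e1 : (C * (((m+1:ℕ):ℝ)+1) ^ k) * ((((m+1:ℕ):ℝ)+1) * r ^ (m + 1 - 1))
                = C * (((m+1:ℕ):ℝ)+1) ^ (k+1) * r ^ m := by
              rw [pow_succ]; norm_num; ring
            rw [e1]
            calc C * (((m+1:ℕ):ℝ)+1) ^ (k+1) * r ^ m
                ≤ C * (((m+1:ℕ):ℝ)+1) ^ (k+1) * r ^ m * (2 * r) :=
                  le_mul_of_one_le_right (by positivity) h2r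
              _ = 2 * C * (((m+1:ℕ):ℝ)+1) ^ (k+1) * r ^ (m+1) := by
                  rw [pow_succ]; ring
  have hs : Summable fun n : ℕ => b n * ((n : ℂ) * z ^ (n - 1)) :=
    Summable.of_norm_bounded usum fun n => bound n z hzr
  have key : HasDerivAt (fun w : ℂ => ∑' n : ℕ, b n * w ^ n)
      (∑' n : ℕ, b n * ((n : ℂ) * z ^ (n - 1))) z := by
    apply hasDerivAt_tsum_of_isPreconnected
      (g := fun (n : ℕ) (w : ℂ) => b n * w ^ n)
      (g' := fun (n : ℕ) (w : ℂ) => b n * ((n : ℂ) * w ^ (n - 1)))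
      (u := fun n : ℕ => 2 * C * ((n : ℝ) + 1) ^ (k + 1) * r ^ n)
      (t := Metric.ball (0:ℂ) r) (y₀ := 0)
    · exact usum
    · exact Metric.isOpen_ball
    · exact (convex_ball (0:ℂ) r).isPreconnected
    · intro n y _
      exact (hasDerivAt_pow n y).const_mul (b n)
    · intro n y hy
      exact bound n y (by simpa [Metric.mem_ball] using hy)
    · simp [Metric.mem_ball, hr0]
    · apply summable_of_ne_finset_zero (s := {0})
      intro n hn
      simp only [Finset.mem_singleton] at hn
      simp [zero_pow, hn]
    · simpa [Metric.mem_ball] using hzr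
  have shift : (∑' n : ℕ, b n * ((n : ℂ) * z ^ (n - 1)))
      = ∑' n : ℕ, ((n : ℂ) + 1) * b (n + 1) * z ^ n := by
    rw [hs.tsum_eq_zero_add]
    simp only [Nat.cast_zero, zero_mul, mul_zero, zero_add, Nat.add_sub_cancel]
    apply tsum_congr
    intro n
    push_cast
    ring
  rwa [shift] at key

noncomputable def coefA (lam : ℂ) (n : ℕ) : ℂ :=
  ((ascPochhammer ℂ n).eval (1 + lam) * (ascPochhammer ℂ n).eval (1 - lam))
      / ((ascPochhammer ℂ n).eval (3 / 2) * (n.factorial : ℂ))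

lemma poch32_ne (n : ℕ) : (ascPochhammer ℂ n).eval (3 / 2 : ℂ) ≠ 0 := by
  induction n with
  | zero => simp
  | succ m ih =>
    rw [ascPochhammer_succ_right]
    simp only [Polynomial.eval_mul, Polynomial.eval_add, Polynomial.eval_X,
      Polynomial.eval_natCast]
    apply mul_ne_zero ih
    have : ((3:ℂ)/2 + (m:ℂ)) = (((3/2 + m : ℝ)) : ℂ) := by push_cast; ring
    rw [this, Complex.ofReal_ne_zero]
    positivity

lemma coefA_zero (lam : ℂ) : coefA lam 0 = 1 := by simp [coefA]

lemma coefA_rec (lam : ℂ) (n : ℕ) :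
    coefA lam (n + 1) * (((n:ℂ) + 1) * ((n:ℂ) + 3/2)) =
      coefA lam n * ((((n:ℂ) + 1) ^ 2) - lam ^ 2) := by
  have h32 := poch32_ne n
  have hfac : ((n.factorial : ℂ)) ≠ 0 := by exact_mod_cast n.factorial_ne_zero
  have hnn : ((n:ℂ) + 3/2) ≠ 0 := by
    have : ((n:ℂ) + 3/2) = (((n + 3/2 : ℝ)) : ℂ) := by push_cast; ring
    rw [this, Complex.ofReal_ne_zero]; positivity
  have hn1 : ((n:ℂ) + 1) ≠ 0 := by
    have : ((n:ℂ) + 1) = (((n + 1 : ℝ)) : ℂ) := by push_cast; ring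
    rw [this, Complex.ofReal_ne_zero]; positivity
  set E1 := (ascPochhammer ℂ n).eval (1 + lam) with hE1
  set E2 := (ascPochhammer ℂ n).eval (1 - lam) with hE2
  set E3 := (ascPochhammer ℂ n).eval (3/2 : ℂ) with hE3
  have keyN : (ascPochhammer ℂ (n+1)).eval (1 + lam) * (ascPochhammer ℂ (n+1)).eval (1 - lam)
      = (E1 * E2) * ((((n:ℂ) + 1) ^ 2) - lam ^ 2) := by
    simp only [ascPochhammer_succ_right, Polynomial.eval_mul, Polynomial.eval_add,
      Polynomial.eval_X, Polynomial.eval_natCast, hE1, hE2]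
    ring
  have keyD : (ascPochhammer ℂ (n+1)).eval (3/2 : ℂ) * ((n+1).factorial : ℂ)
      = (E3 * (n.factorial : ℂ)) * (((n:ℂ) + 1) * ((n:ℂ) + 3/2)) := by
    simp only [ascPochhammer_succ_right, Polynomial.eval_mul, Polynomial.eval_add,
      Polynomial.eval_X, Polynomial.eval_natCast, hE3, Nat.factorial_succ, Nat.cast_mul]
    push_cast
    ring
  unfold coefA
  rw [keyN, keyD]
  rw [← hE1, ← hE2, ← hE3]
  have hq : E3 * (n.factorial : ℂ) ≠ 0 := mul_ne_zero h32 hfac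
  have hc : ((n:ℂ) + 1) * ((n:ℂ) + 3/2) ≠ 0 := mul_ne_zero hn1 hnn
  have gen : ∀ (p w q c : ℂ), q ≠ 0 → c ≠ 0 → (p * w)/(q * c) * c = p/q * w := by
    intro p w q c hq hc
    field_simp
  exact gen _ _ _ _ hq hc

lemma sum_inv_sq (n : ℕ) : (∑ j ∈ Finset.range n, (1:ℝ)/((j:ℝ)+1)^2) ≤ 2 := by
  have key : ∀ n : ℕ, (∑ j ∈ Finset.range n, (1:ℝ)/((j:ℝ)+1)^2) ≤ 2 - 2/((n:ℝ)+1) := by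
    intro n
    induction n with
    | zero => norm_num
    | succ m ih =>
      rw [Finset.sum_range_succ]
      have h1 : (1:ℝ)/((m:ℝ)+1)^2 ≤ 2/((m:ℝ)+1) - 2/((m:ℝ)+1+1) := by
        rw [div_sub_div _ _ (by positivity) (by positivity),
          div_le_div_iff₀ (by positivity) (by positivity)]
        nlinarith [Nat.cast_nonneg (α := ℝ) m]
      push_cast
      linarith
  calc (∑ j ∈ Finset.range n, (1:ℝ)/((j:ℝ)+1)^2) ≤ 2 - 2/((n:ℝ)+1) := key n
    _ ≤ 2 := sub_le_self 2 (by positivity)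

lemma coefA_bound (lam : ℂ) (n : ℕ) : ‖coefA lam n‖ ≤ Real.exp (2 * ‖lam‖^2) := by
  set L := ‖lam‖^2 with hL
  have hL0 : 0 ≤ L := by positivity
  have step1 : ∀ n, ‖coefA lam n‖ ≤ ∏ j ∈ Finset.range n, (1 + L/((j:ℝ)+1)^2) := by
    intro n
    induction n with
    | zero => simp [coefA_zero]
    | succ m ih =>
      rw [Finset.prod_range_succ]
      have hnn : ((m:ℂ) + 3/2) ≠ 0 := by
        have : ((m:ℂ) + 3/2) = (((m + 3/2 : ℝ)) : ℂ) := by push_cast; ring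
        rw [this, Complex.ofReal_ne_zero]; positivity
      have hn1 : ((m:ℂ) + 1) ≠ 0 := by
        have : ((m:ℂ) + 1) = (((m + 1 : ℝ)) : ℂ) := by push_cast; ring
        rw [this, Complex.ofReal_ne_zero]; positivity
      have hc : ((m:ℂ) + 1) * ((m:ℂ) + 3/2) ≠ 0 := mul_ne_zero hn1 hnn
      have hrec : coefA lam (m+1)
          = coefA lam m * ((((m:ℂ) + 1) ^ 2) - lam ^ 2) / (((m:ℂ) + 1) * ((m:ℂ) + 3/2)) := by
        rw [eq_div_iff hc]
        exact coefA_rec lam m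
      have hden : ‖((m:ℂ) + 1) * ((m:ℂ) + 3/2)‖ = ((m:ℝ) + 1) * ((m:ℝ) + 3/2) := by
        have : ((m:ℂ) + 1) * ((m:ℂ) + 3/2) = ((((m:ℝ) + 1) * ((m:ℝ) + 3/2) : ℝ) : ℂ) := by
          push_cast; ring
        rw [this, Complex.norm_real, Real.norm_eq_abs, abs_of_pos (by positivity)]
      have hnum : ‖(((m:ℂ) + 1) ^ 2) - lam ^ 2‖ ≤ ((m:ℝ) + 1)^2 + L := by
        calc ‖(((m:ℂ) + 1) ^ 2) - lam ^ 2‖ ≤ ‖((m:ℂ) + 1) ^ 2‖ + ‖lam ^ 2‖ := norm_sub_le _ _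
          _ = ((m:ℝ) + 1)^2 + L := by
            rw [norm_pow, norm_pow, hL]
            congr 2
            have : ((m:ℂ) + 1) = ((((m:ℝ) + 1) : ℝ) : ℂ) := by push_cast; ring
            rw [this, Complex.norm_real, Real.norm_eq_abs, abs_of_pos (by positivity)]
      have hratio : ‖(((m:ℂ) + 1) ^ 2) - lam ^ 2‖ / (((m:ℝ) + 1) * ((m:ℝ) + 3/2))
          ≤ 1 + L/((m:ℝ)+1)^2 := by
        calc ‖(((m:ℂ) + 1) ^ 2) - lam ^ 2‖ / (((m:ℝ) + 1) * ((m:ℝ) + 3/2))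
            ≤ (((m:ℝ) + 1)^2 + L) / (((m:ℝ) + 1) * ((m:ℝ) + 3/2)) :=
              div_le_div_of_nonneg_right ?_ (by positivity) |>.trans_eq rfl
          _ ≤ (((m:ℝ) + 1)^2 + L) / (((m:ℝ) + 1) * ((m:ℝ) + 1)) := by
              apply div_le_div_of_nonneg_left (by positivity) (by positivity)
              nlinarith [Nat.cast_nonneg (α := ℝ) m]
          _ = 1 + L/((m:ℝ)+1)^2 := by
              rw [show ((m:ℝ)+1)*((m:ℝ)+1) = ((m:ℝ)+1)^2 by ring, add_div,
                div_self (by positivity : ((m:ℝ)+1)^2 ≠ 0)]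
        exact hnum
      rw [hrec, norm_div, hden]
      calc ‖coefA lam m * ((((m:ℂ) + 1) ^ 2) - lam ^ 2)‖ / (((m:ℝ) + 1) * ((m:ℝ) + 3/2))
          = ‖coefA lam m‖ * (‖(((m:ℂ) + 1) ^ 2) - lam ^ 2‖ / (((m:ℝ) + 1) * ((m:ℝ) + 3/2))) := by
            rw [norm_mul]; ring
        _ ≤ (∏ j ∈ Finset.range m, (1 + L/((j:ℝ)+1)^2)) * (1 + L/((m:ℝ)+1)^2) := by
            apply mul_le_mul ih hratio (by positivity) ?_
            apply Finset.prod_nonneg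
            intro j _
            positivity
  calc ‖coefA lam n‖ ≤ ∏ j ∈ Finset.range n, (1 + L/((j:ℝ)+1)^2) := step1 n
    _ ≤ ∏ j ∈ Finset.range n, Real.exp (L/((j:ℝ)+1)^2) := by
        apply Finset.prod_le_prod
        · intro j _; positivity
        · intro j _
          have := Real.add_one_le_exp (L/((j:ℝ)+1)^2)
          linarith
    _ = Real.exp (∑ j ∈ Finset.range n, L/((j:ℝ)+1)^2) := by rw [Real.exp_sum]
    _ ≤ Real.exp (2 * L) := by
        apply Real.exp_le_exp.2
        have : (∑ j ∈ Finset.range n, L/((j:ℝ)+1)^2)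
            = L * (∑ j ∈ Finset.range n, 1/((j:ℝ)+1)^2) := by
          rw [Finset.mul_sum]
          apply Finset.sum_congr rfl
          intro j _
          ring
        rw [this]
        calc L * (∑ j ∈ Finset.range n, 1/((j:ℝ)+1)^2) ≤ L * 2 :=
              mul_le_mul_of_nonneg_left (sum_inv_sq n) hL0
          _ = 2 * L := by ring

section ODE

variable (lam : ℂ)

noncomputable def Gf (z : ℂ) : ℂ := ∑' n : ℕ, coefA lam n * z ^ n
noncomputable def Gf1 (z : ℂ) : ℂ := ∑' n : ℕ, ((n:ℂ) + 1) * coefA lam (n+1) * z ^ n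
noncomputable def Gf2 (z : ℂ) : ℂ :=
  ∑' n : ℕ, ((n:ℂ) + 2) * ((n:ℂ) + 1) * coefA lam (n+2) * z ^ n

lemma tsum_shift {g : ℕ → ℂ} (hg : Summable g) (h0 : g 0 = 0) :
    ∑' n : ℕ, g (n + 1) = ∑' n : ℕ, g n := by
  rw [hg.tsum_eq_zero_add, h0, zero_add]

lemma bound0 : ∀ n : ℕ, ‖coefA lam n‖ ≤ Real.exp (2*‖lam‖^2) * ((n:ℝ)+1)^0 := by
  intro n; simpa using coefA_bound lam n

lemma bound1 : ∀ n : ℕ, ‖((n:ℂ) + 1) * coefA lam (n+1)‖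
    ≤ Real.exp (2*‖lam‖^2) * ((n:ℝ)+1)^1 := by
  intro n
  rw [norm_mul]
  have h1 : ‖((n:ℂ) + 1)‖ = (n:ℝ) + 1 := by
    have : ((n:ℂ) + 1) = ((((n:ℝ) + 1) : ℝ) : ℂ) := by push_cast; ring
    rw [this, Complex.norm_real, Real.norm_eq_abs, abs_of_pos (by positivity)]
  rw [h1, pow_one, mul_comm (Real.exp _)]
  exact mul_le_mul_of_nonneg_left (coefA_bound lam (n+1)) (by positivity)

lemma bound2 : ∀ n : ℕ, ‖((n:ℂ) + 2) * ((n:ℂ) + 1) * coefA lam (n+2)‖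
    ≤ (2 * Real.exp (2*‖lam‖^2)) * ((n:ℝ)+1)^2 := by
  intro n
  rw [norm_mul, norm_mul]
  have h1 : ‖((n:ℂ) + 1)‖ = (n:ℝ) + 1 := by
    have : ((n:ℂ) + 1) = ((((n:ℝ) + 1) : ℝ) : ℂ) := by push_cast; ring
    rw [this, Complex.norm_real, Real.norm_eq_abs, abs_of_pos (by positivity)]
  have h2 : ‖((n:ℂ) + 2)‖ = (n:ℝ) + 2 := by
    have : ((n:ℂ) + 2) = ((((n:ℝ) + 2) : ℝ) : ℂ) := by push_cast; ring
    rw [this, Complex.norm_real, Real.norm_eq_abs, abs_of_pos (by positivity)]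
  rw [h1, h2]
  have hb := coefA_bound lam (n+2)
  have hE : (0:ℝ) ≤ Real.exp (2*‖lam‖^2) := (Real.exp_pos _).le
  have hq : ((n:ℝ)+2)*((n:ℝ)+1) ≤ 2*((n:ℝ)+1)^2 := by nlinarith [Nat.cast_nonneg (α := ℝ) n]
  calc ((n:ℝ)+2)*((n:ℝ)+1)*‖coefA lam (n+2)‖
      ≤ ((n:ℝ)+2)*((n:ℝ)+1)*Real.exp (2*‖lam‖^2) := by
        apply mul_le_mul_of_nonneg_left hb (by positivity)
    _ ≤ 2*((n:ℝ)+1)^2*Real.exp (2*‖lam‖^2) := mul_le_mul_of_nonneg_right hq hE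
    _ = (2 * Real.exp (2*‖lam‖^2)) * ((n:ℝ)+1)^2 := by ring

lemma Gf_hasDeriv {z : ℂ} (hz : ‖z‖ < 1) : HasDerivAt (Gf lam) (Gf1 lam z) z := by
  have h := hasDerivAt_psum (b := fun n => coefA lam n) (hC := (Real.exp_pos _).le)
    (hb := bound0 lam) hz
  unfold Gf Gf1
  exact h


lemma Gf1_hasDeriv {z : ℂ} (hz : ‖z‖ < 1) : HasDerivAt (Gf1 lam) (Gf2 lam z) z := by
  have h := hasDerivAt_psum (b := fun n => ((n:ℂ) + 1) * coefA lam (n+1))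
    (hC := (Real.exp_pos _).le) (hb := bound1 lam) hz
  unfold Gf1 Gf2
  convert h using 1
  apply tsum_congr
  intro n
  push_cast
  ring

lemma Gf_ODE {z : ℂ} (hz : ‖z‖ < 1) :
    z * (1 - z) * Gf2 lam z + (3/2 - 3*z) * Gf1 lam z - (1 - lam^2) * Gf lam z = 0 := by
  set E := Real.exp (2*‖lam‖^2) with hE
  have hE0 : (0:ℝ) ≤ E := (Real.exp_pos _).le
  -- coefficient sequences
  set t1 : ℕ → ℂ := fun n => ((n:ℂ)+1)*(n:ℂ)*coefA lam (n+1) with ht1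
  set t2 : ℕ → ℂ := fun n => (n:ℂ)*((n:ℂ)-1)*coefA lam n with ht2
  set t3 : ℕ → ℂ := fun n => (3/2)*((n:ℂ)+1)*coefA lam (n+1) with ht3
  set t4 : ℕ → ℂ := fun n => 3*(n:ℂ)*coefA lam n with ht4
  set t5 : ℕ → ℂ := fun n => (1-lam^2)*coefA lam n with ht5
  have hnorm : ∀ n : ℕ, ‖((n:ℂ))‖ ≤ (n:ℝ)+1 := by
    intro n
    rw [Complex.norm_natCast]
    linarith
  have hnorm1 : ∀ n : ℕ, ‖((n:ℂ)+1)‖ = (n:ℝ)+1 := by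
    intro n
    have : ((n:ℂ) + 1) = ((((n:ℝ) + 1) : ℝ) : ℂ) := by push_cast; ring
    rw [this, Complex.norm_real, Real.norm_eq_abs, abs_of_pos (by positivity)]
  have hb1 : ∀ n : ℕ, ‖t1 n‖ ≤ E * ((n:ℝ)+1)^2 := by
    intro n
    rw [ht1]
    simp only
    rw [norm_mul, norm_mul, hnorm1]
    calc ((n:ℝ)+1) * ‖((n:ℂ))‖ * ‖coefA lam (n+1)‖
        ≤ (((n:ℝ)+1) * ((n:ℝ)+1)) * E := by
          apply mul_le_mul
          · exact mul_le_mul_of_nonneg_left (hnorm n) (by positivity)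
          · exact coefA_bound lam (n+1)
          · exact norm_nonneg _
          · positivity
      _ = E * ((n:ℝ)+1)^2 := by ring
  have hb2 : ∀ n : ℕ, ‖t2 n‖ ≤ E * ((n:ℝ)+1)^2 := by
    intro n
    rw [ht2]
    simp only
    rw [norm_mul, norm_mul]
    have hm : ‖((n:ℂ)-1)‖ ≤ (n:ℝ)+1 := by
      calc ‖((n:ℂ)-1)‖ ≤ ‖((n:ℂ))‖ + ‖(1:ℂ)‖ := norm_sub_le _ _
        _ = (n:ℝ) + 1 := by rw [Complex.norm_natCast, norm_one]
    calc ‖((n:ℂ))‖ * ‖((n:ℂ)-1)‖ * ‖coefA lam n‖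
        ≤ (((n:ℝ)+1) * ((n:ℝ)+1)) * E := by
          apply mul_le_mul
          · exact mul_le_mul (hnorm n) hm (norm_nonneg _) (by positivity)
          · exact coefA_bound lam n
          · exact norm_nonneg _
          · positivity
      _ = E * ((n:ℝ)+1)^2 := by ring
  have hb3 : ∀ n : ℕ, ‖t3 n‖ ≤ (2*E) * ((n:ℝ)+1)^2 := by
    intro n
    rw [ht3]
    simp only
    rw [norm_mul, norm_mul, hnorm1]
    have h32 : ‖((3:ℂ)/2)‖ ≤ 2 := by
      rw [show ((3:ℂ)/2) = (((3/2 : ℝ)) : ℂ) by norm_num, Complex.norm_real,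
        Real.norm_eq_abs]
      rw [abs_of_pos (by norm_num)]
      norm_num
    calc ‖((3:ℂ)/2)‖ * ((n:ℝ)+1) * ‖coefA lam (n+1)‖
        ≤ (2 * ((n:ℝ)+1)) * E := by
          apply mul_le_mul
          · exact mul_le_mul_of_nonneg_right h32 (by positivity)
          · exact coefA_bound lam (n+1)
          · exact norm_nonneg _
          · positivity
      _ ≤ (2*E) * ((n:ℝ)+1)^2 := by
          nlinarith [mul_nonneg (mul_nonneg hE0 (Nat.cast_nonneg (α := ℝ) n))
            (by positivity : (0:ℝ) ≤ (n:ℝ)+1)]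
  have hb4 : ∀ n : ℕ, ‖t4 n‖ ≤ (3*E) * ((n:ℝ)+1)^2 := by
    intro n
    rw [ht4]
    simp only
    rw [norm_mul, norm_mul]
    have h3 : ‖(3:ℂ)‖ = 3 := by
      rw [show ((3:ℂ)) = (((3 : ℝ)) : ℂ) by norm_num, Complex.norm_real, Real.norm_eq_abs]
      norm_num
    rw [h3]
    calc 3 * ‖((n:ℂ))‖ * ‖coefA lam n‖
        ≤ 3 * ((n:ℝ)+1) * E := by
          apply mul_le_mul
          · exact mul_le_mul_of_nonneg_left (hnorm n) (by norm_num)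
          · exact coefA_bound lam n
          · exact norm_nonneg _
          · positivity
      _ ≤ (3*E) * ((n:ℝ)+1)^2 := by
          nlinarith [mul_nonneg (mul_nonneg hE0 (Nat.cast_nonneg (α := ℝ) n))
            (by positivity : (0:ℝ) ≤ (n:ℝ)+1)]
  have hb5 : ∀ n : ℕ, ‖t5 n‖ ≤ (‖(1:ℂ)-lam^2‖ * E) * ((n:ℝ)+1)^2 := by
    intro n
    rw [ht5]
    simp only
    rw [norm_mul]
    calc ‖(1:ℂ)-lam^2‖ * ‖coefA lam n‖ ≤ ‖(1:ℂ)-lam^2‖ * E :=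
          mul_le_mul_of_nonneg_left (coefA_bound lam n) (norm_nonneg _)
      _ ≤ (‖(1:ℂ)-lam^2‖ * E) * ((n:ℝ)+1)^2 := by
          nlinarith [mul_nonneg (mul_nonneg (norm_nonneg ((1:ℂ)-lam^2)) hE0)
              (Nat.cast_nonneg (α := ℝ) n),
            mul_nonneg (mul_nonneg (mul_nonneg (norm_nonneg ((1:ℂ)-lam^2)) hE0)
              (Nat.cast_nonneg (α := ℝ) n)) (Nat.cast_nonneg (α := ℝ) n)]
  have s1 : Summable fun n : ℕ => t1 n * z^n := summ_coeff hb1 hz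
  have s2 : Summable fun n : ℕ => t2 n * z^n := summ_coeff hb2 hz
  have s3 : Summable fun n : ℕ => t3 n * z^n := summ_coeff hb3 hz
  have s4 : Summable fun n : ℕ => t4 n * z^n := summ_coeff hb4 hz
  have s5 : Summable fun n : ℕ => t5 n * z^n := summ_coeff hb5 hz
  -- rewrite the pieces
  have e1 : z * Gf2 lam z = ∑' n : ℕ, t1 n * z^n := by
    rw [Gf2, ← tsum_mul_left]
    rw [← tsum_shift s1 (by rw [ht1]; simp)]
    apply tsum_congr
    intro n
    rw [ht1]
    push_cast
    ring
  have e2 : z * (z * Gf2 lam z) = ∑' n : ℕ, t2 n * z^n := by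
    rw [e1, ← tsum_mul_left]
    rw [← tsum_shift s2 (by rw [ht2]; simp)]
    apply tsum_congr
    intro n
    rw [ht1, ht2]
    push_cast
    ring
  have e3 : (3/2 : ℂ) * Gf1 lam z = ∑' n : ℕ, t3 n * z^n := by
    rw [Gf1, ← tsum_mul_left]
    apply tsum_congr
    intro n
    rw [ht3]
    ring
  have e4 : (3:ℂ) * (z * Gf1 lam z) = ∑' n : ℕ, t4 n * z^n := by
    have ez : z * Gf1 lam z = ∑' n : ℕ, (n:ℂ) * coefA lam n * z^n := by
      rw [Gf1, ← tsum_mul_left]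
      have hsz : Summable fun n : ℕ => (n:ℂ) * coefA lam n * z^n := by
        apply summ_coeff (C := E) (k := 1) _ hz
        intro n
        rw [norm_mul]
        calc ‖((n:ℂ))‖ * ‖coefA lam n‖ ≤ ((n:ℝ)+1) * E :=
              mul_le_mul (hnorm n) (coefA_bound lam n) (norm_nonneg _) (by positivity)
          _ = E * ((n:ℝ)+1)^1 := by ring
      rw [← tsum_shift hsz (by simp)]
      apply tsum_congr
      intro n
      push_cast
      ring
    rw [ez, ← tsum_mul_left]
    apply tsum_congr
    intro n
    rw [ht4]
    ring
  have e5 : ((1:ℂ)-lam^2) * Gf lam z = ∑' n : ℕ, t5 n * z^n := by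
    rw [Gf, ← tsum_mul_left]
    apply tsum_congr
    intro n
    rw [ht5]
    ring
  have expand : z * (1 - z) * Gf2 lam z + (3/2 - 3*z) * Gf1 lam z - (1 - lam^2) * Gf lam z
      = (z * Gf2 lam z - z * (z * Gf2 lam z)) + ((3/2 : ℂ) * Gf1 lam z - (3:ℂ) * (z * Gf1 lam z))
        - ((1:ℂ)-lam^2) * Gf lam z := by ring
  rw [expand, e2, e1, e4, e3, e5]
  rw [← s1.tsum_sub s2, ← s3.tsum_sub s4, ← (s1.sub s2).tsum_add (s3.sub s4),
    ← ((s1.sub s2).add (s3.sub s4)).tsum_sub s5]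
  have : ∀ n : ℕ, (t1 n * z^n - t2 n * z^n + (t3 n * z^n - t4 n * z^n)) - t5 n * z^n
      = ((t1 n + t3 n) - (t2 n + t4 n + t5 n)) * z^n := by intro n; ring
  rw [tsum_congr this]
  have hzero : ∀ n : ℕ, ((t1 n + t3 n) - (t2 n + t4 n + t5 n)) = 0 := by
    intro n
    rw [ht1, ht2, ht3, ht4, ht5]
    simp only
    linear_combination coefA_rec lam n
  rw [tsum_congr (fun n => by rw [hzero n, zero_mul] : ∀ n : ℕ,
    ((t1 n + t3 n) - (t2 n + t4 n + t5 n)) * z^n = 0)]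
  exact tsum_zero

end ODE

section Main

noncomputable def zc (u : ℝ) : ℂ := -Complex.sinh ((u:ℂ)/2)^2

def Jset : Set ℝ := Set.Ioo (-(2 * Real.arsinh 1)) (2 * Real.arsinh 1)

lemma mem_J_iff (u : ℝ) : u ∈ Jset ↔ |Real.sinh (u/2)| < 1 := by
  rw [Jset, Set.mem_Ioo, abs_lt]
  constructor
  · rintro ⟨h1, h2⟩
    constructor
    · have : Real.sinh (-(Real.arsinh 1)) < Real.sinh (u/2) :=
        Real.sinh_lt_sinh.2 (by linarith)
      rwa [Real.sinh_neg, Real.sinh_arsinh] at this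
    · have : Real.sinh (u/2) < Real.sinh (Real.arsinh 1) :=
        Real.sinh_lt_sinh.2 (by linarith)
      rwa [Real.sinh_arsinh] at this
  · rintro ⟨h1, h2⟩
    have e1 : Real.sinh (-(Real.arsinh 1)) < Real.sinh (u/2) := by
      rwa [Real.sinh_neg, Real.sinh_arsinh]
    have e2 : Real.sinh (u/2) < Real.sinh (Real.arsinh 1) := by
      rwa [Real.sinh_arsinh]
    have f1 := Real.sinh_lt_sinh.1 e1
    have f2 := Real.sinh_lt_sinh.1 e2
    constructor <;> linarith

lemma zc_eq_real (u : ℝ) : zc u = ((-(Real.sinh (u/2)^2) : ℝ) : ℂ) := by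
  rw [zc]
  push_cast [Complex.ofReal_sinh]
  norm_num

lemma norm_zc {u : ℝ} (hu : |Real.sinh (u/2)| < 1) : ‖zc u‖ < 1 := by
  rw [zc_eq_real, Complex.norm_real, Real.norm_eq_abs, abs_neg, abs_pow, sq_abs]
  nlinarith [abs_nonneg (Real.sinh (u/2)), sq_abs (Real.sinh (u/2))]

lemma hasDerivAt_ofReal (u : ℝ) : HasDerivAt (fun v : ℝ => (v:ℂ)) 1 u := by
  have h : HasDerivAt (Complex.ofRealCLM : ℝ →L[ℝ] ℂ) (Complex.ofRealCLM 1) u :=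
    ContinuousLinearMap.hasDerivAt _
  simpa using (hasDerivAt_id u).ofReal_comp

lemma hasDerivAt_zc (u : ℝ) : HasDerivAt zc (-(Complex.sinh (u:ℂ))/2) u := by
  have inner : HasDerivAt (fun v : ℝ => ((v:ℂ)/2)) (1/2) u :=
    (hasDerivAt_ofReal u).div_const 2
  have hS : HasDerivAt (fun v : ℝ => Complex.sinh ((v:ℂ)/2))
      ((1/2 : ℂ) • Complex.cosh ((u:ℂ)/2)) u := by
    have := (Complex.hasDerivAt_sinh ((u:ℂ)/2)).scomp u inner
    simpa [Function.comp_def] using this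
  have funeq : zc = fun v : ℝ => -(Complex.sinh ((v:ℂ)/2) * Complex.sinh ((v:ℂ)/2)) := by
    funext v
    rw [zc]; ring
  rw [funeq]
  have hmul := (hS.mul hS).neg
  refine hmul.congr_deriv ?_
  have hs2 : Complex.sinh (u:ℂ) = 2 * Complex.sinh ((u:ℂ)/2) * Complex.cosh ((u:ℂ)/2) := by
    have := Complex.sinh_two_mul ((u:ℂ)/2)
    rw [show 2 * ((u:ℂ)/2) = (u:ℂ) by ring] at this
    exact this
  rw [hs2]
  simp only [smul_eq_mul]
  ring

lemma hasDerivAt_csinh (u : ℝ) :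
    HasDerivAt (fun v : ℝ => Complex.sinh (v:ℂ)) (Complex.cosh (u:ℂ)) u := by
  have := (Complex.hasDerivAt_sinh ((u:ℂ))).scomp u (hasDerivAt_ofReal u)
  simpa [Function.comp_def] using this

lemma hasDerivAt_csinh_lam (lam : ℂ) (u : ℝ) :
    HasDerivAt (fun v : ℝ => Complex.sinh (lam * (v:ℂ))) (lam * Complex.cosh (lam * (u:ℂ))) u := by
  have inner : HasDerivAt (fun v : ℝ => (lam * (v:ℂ))) lam u := by
    simpa using (hasDerivAt_ofReal u).const_mul lam
  have := (Complex.hasDerivAt_sinh (lam * (u:ℂ))).scomp u inner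
  simpa [Function.comp_def, smul_eq_mul] using this

lemma hasDerivAt_ccosh_lam (lam : ℂ) (u : ℝ) :
    HasDerivAt (fun v : ℝ => Complex.cosh (lam * (v:ℂ))) (lam * Complex.sinh (lam * (u:ℂ))) u := by
  have inner : HasDerivAt (fun v : ℝ => (lam * (v:ℂ))) lam u := by
    simpa using (hasDerivAt_ofReal u).const_mul lam
  have := (Complex.hasDerivAt_cosh (lam * (u:ℂ))).scomp u inner
  simpa [Function.comp_def, smul_eq_mul] using this

variable (lam : ℂ)

noncomputable def Hf (u : ℝ) : ℂ :=
  lam * Complex.sinh (u:ℂ) * Gf lam (zc u) - Complex.sinh (lam * (u:ℂ))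

noncomputable def Hf' (u : ℝ) : ℂ :=
  lam * Complex.cosh (u:ℂ) * Gf lam (zc u)
    + lam * Complex.sinh (u:ℂ) * (-(Complex.sinh (u:ℂ))/2 * Gf1 lam (zc u))
    - lam * Complex.cosh (lam * (u:ℂ))

noncomputable def Hf'' (u : ℝ) : ℂ :=
  lam * Complex.sinh (u:ℂ) * Gf lam (zc u)
    + 2 * (lam * Complex.cosh (u:ℂ)) * (-(Complex.sinh (u:ℂ))/2 * Gf1 lam (zc u))
    + lam * Complex.sinh (u:ℂ) * ((-(Complex.sinh (u:ℂ))/2)^2 * Gf2 lam (zc u)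
        + (-(Complex.cosh (u:ℂ))/2) * Gf1 lam (zc u))
    - lam^2 * Complex.sinh (lam * (u:ℂ))

lemma hasDerivAt_GfComp {u : ℝ} (hu : u ∈ Jset) :
    HasDerivAt (fun v : ℝ => Gf lam (zc v)) (-(Complex.sinh (u:ℂ))/2 * Gf1 lam (zc u)) u := by
  have hz : ‖zc u‖ < 1 := norm_zc ((mem_J_iff u).1 hu)
  have := (Gf_hasDeriv lam hz).scomp u (hasDerivAt_zc u)
  simpa [Function.comp_def, smul_eq_mul] using this

lemma hasDerivAt_Gf1Comp {u : ℝ} (hu : u ∈ Jset) :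
    HasDerivAt (fun v : ℝ => Gf1 lam (zc v)) (-(Complex.sinh (u:ℂ))/2 * Gf2 lam (zc u)) u := by
  have hz : ‖zc u‖ < 1 := norm_zc ((mem_J_iff u).1 hu)
  have := (Gf1_hasDeriv lam hz).scomp u (hasDerivAt_zc u)
  simpa [Function.comp_def, smul_eq_mul] using this

lemma hasDerivAt_Hf {u : ℝ} (hu : u ∈ Jset) : HasDerivAt (Hf lam) (Hf' lam u) u := by
  have h1 : HasDerivAt (fun v : ℝ => lam * Complex.sinh (v:ℂ) * Gf lam (zc v))
      ((lam * Complex.cosh (u:ℂ)) * Gf lam (zc u)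
        + (lam * Complex.sinh (u:ℂ)) * (-(Complex.sinh (u:ℂ))/2 * Gf1 lam (zc u))) u :=
    ((hasDerivAt_csinh u).const_mul lam).mul (hasDerivAt_GfComp lam hu)
  have := h1.sub (hasDerivAt_csinh_lam lam u)
  unfold Hf Hf'
  exact this.congr_deriv (by ring)

lemma hasDerivAt_Hf' {u : ℝ} (hu : u ∈ Jset) : HasDerivAt (Hf' lam) (Hf'' lam u) u := by
  have hA : HasDerivAt (fun v : ℝ => lam * Complex.cosh (v:ℂ) * Gf lam (zc v))
      ((lam * Complex.sinh (u:ℂ)) * Gf lam (zc u)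
        + (lam * Complex.cosh (u:ℂ)) * (-(Complex.sinh (u:ℂ))/2 * Gf1 lam (zc u))) u := by
    have hcosh : HasDerivAt (fun v : ℝ => Complex.cosh (v:ℂ)) (Complex.sinh (u:ℂ)) u := by
      have := (Complex.hasDerivAt_cosh ((u:ℂ))).scomp u (hasDerivAt_ofReal u)
      simpa [Function.comp_def] using this
    exact (hcosh.const_mul lam).mul (hasDerivAt_GfComp lam hu)
  have hB : HasDerivAt (fun v : ℝ => -(Complex.sinh (v:ℂ))/2 * Gf1 lam (zc v))
      ((-(Complex.cosh (u:ℂ))/2) * Gf1 lam (zc u)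
        + (-(Complex.sinh (u:ℂ))/2) * (-(Complex.sinh (u:ℂ))/2 * Gf2 lam (zc u))) u := by
    have hs2 : HasDerivAt (fun v : ℝ => -(Complex.sinh (v:ℂ))/2) (-(Complex.cosh (u:ℂ))/2) u :=
      ((hasDerivAt_csinh u).neg).div_const 2
    exact hs2.mul (hasDerivAt_Gf1Comp lam hu)
  have hC : HasDerivAt (fun v : ℝ => lam * Complex.sinh (v:ℂ)
      * (-(Complex.sinh (v:ℂ))/2 * Gf1 lam (zc v)))
      ((lam * Complex.cosh (u:ℂ)) * (-(Complex.sinh (u:ℂ))/2 * Gf1 lam (zc u))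
        + (lam * Complex.sinh (u:ℂ)) * ((-(Complex.cosh (u:ℂ))/2) * Gf1 lam (zc u)
          + (-(Complex.sinh (u:ℂ))/2) * (-(Complex.sinh (u:ℂ))/2 * Gf2 lam (zc u)))) u :=
    ((hasDerivAt_csinh u).const_mul lam).mul hB
  have hD : HasDerivAt (fun v : ℝ => lam * Complex.cosh (lam * (v:ℂ)))
      (lam * (lam * Complex.sinh (lam * (u:ℂ)))) u :=
    (hasDerivAt_ccosh_lam lam u).const_mul lam
  have := (hA.add hC).sub hD
  unfold Hf' Hf''
  exact this.congr_deriv (by ring)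

lemma Hf_ODE (u : ℝ) (hu : u ∈ Jset) : Hf'' lam u = lam^2 * Hf lam u := by
  have hz : ‖zc u‖ < 1 := norm_zc ((mem_J_iff u).1 hu)
  have hODEu := Gf_ODE lam hz
  have hp : Complex.cosh ((u:ℂ)/2)^2 - Complex.sinh ((u:ℂ)/2)^2 = 1 :=
    Complex.cosh_sq_sub_sinh_sq _
  have hzS : zc u = -Complex.sinh ((u:ℂ)/2)^2 := rfl
  have hODEu' : (-Complex.sinh ((u:ℂ)/2)^2) * (1 - (-Complex.sinh ((u:ℂ)/2)^2)) * Gf2 lam (zc u)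
      + (3/2 - 3*(-Complex.sinh ((u:ℂ)/2)^2)) * Gf1 lam (zc u)
      - (1 - lam^2) * Gf lam (zc u) = 0 := by
    rw [← hzS]
    exact hODEu
  have hs2 : Complex.sinh (u:ℂ) = 2 * Complex.sinh ((u:ℂ)/2) * Complex.cosh ((u:ℂ)/2) := by
    have := Complex.sinh_two_mul ((u:ℂ)/2)
    rw [show 2 * ((u:ℂ)/2) = (u:ℂ) by ring] at this
    exact this
  have hc2 : Complex.cosh (u:ℂ) = 2 * Complex.cosh ((u:ℂ)/2)^2 - 1 := by
    have := Complex.cosh_two_mul ((u:ℂ)/2)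
    rw [show 2 * ((u:ℂ)/2) = (u:ℂ) by ring] at this
    rw [this]
    linear_combination - hp
  unfold Hf'' Hf
  rw [hs2, hc2]
  linear_combination (-(lam * (2 * Complex.sinh ((u:ℂ)/2) * Complex.cosh ((u:ℂ)/2)))) * hODEu'
    + (lam * (2 * Complex.sinh ((u:ℂ)/2) * Complex.cosh ((u:ℂ)/2))
        * (Complex.sinh ((u:ℂ)/2)^2 * Gf2 lam (zc u) - 3 * Gf1 lam (zc u))) * hp

end Main

lemma const_on_J {f : ℝ → ℂ} (hf : ∀ u ∈ Jset, HasDerivAt f 0 u) {x y : ℝ}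
    (hx : x ∈ Jset) (hy : y ∈ Jset) : f x = f y := by
  have hconv : Convex ℝ Jset := convex_Ioo _ _
  have hopen : IsOpen Jset := isOpen_Ioo
  apply hconv.is_const_of_fderivWithin_eq_zero (𝕜 := ℝ) ?_ ?_ hx hy
  · intro u hu
    exact (hf u hu).differentiableAt.differentiableWithinAt
  · intro u hu
    rw [fderivWithin_of_isOpen hopen hu, (hf u hu).hasFDerivAt.fderiv]
    ext w
    simp

/-- The Gauss hypergeometric series `F(a,b;c;z)`. -/
noncomputable def hypF (a b c z : ℂ) : ℂ :=
  ∑' n : ℕ, ((ascPochhammer ℂ n).eval a * (ascPochhammer ℂ n).eval b)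
      / ((ascPochhammer ℂ n).eval c * (n.factorial : ℂ)) * z ^ n

theorem sinh_div_eq_hypF (lam : ℂ) (hlam : lam ≠ 0) (θ : ℝ) (hθ0 : θ ≠ 0)
    (hθ : |Real.sinh (θ / 2)| < 1) :
    Complex.sinh (lam * θ) / (lam * Complex.sinh θ)
      = hypF (1 + lam) (1 - lam) (3 / 2) ((-(Real.sinh (θ / 2) ^ 2) : ℝ) : ℂ) := by
  have hθJ : θ ∈ Jset := (mem_J_iff θ).2 hθ
  have h0J : (0:ℝ) ∈ Jset := by
    rw [mem_J_iff]
    norm_num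
  set P : ℝ → ℂ := fun u => Hf' lam u * Complex.cosh (lam * (u:ℂ))
    - lam * Hf lam u * Complex.sinh (lam * (u:ℂ)) with hPdef
  set Q : ℝ → ℂ := fun u => lam * Hf lam u * Complex.cosh (lam * (u:ℂ))
    - Hf' lam u * Complex.sinh (lam * (u:ℂ)) with hQdef
  have hPd : ∀ u ∈ Jset, HasDerivAt P 0 u := by
    intro u hu
    have h := ((hasDerivAt_Hf' lam hu).mul (hasDerivAt_ccosh_lam lam u)).sub
      (((hasDerivAt_Hf lam hu).const_mul lam).mul (hasDerivAt_csinh_lam lam u))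
    refine h.congr_deriv ?_
    symm
    linear_combination (-(Complex.cosh (lam * (u:ℂ)))) * (Hf_ODE lam u hu)
  have hQd : ∀ u ∈ Jset, HasDerivAt Q 0 u := by
    intro u hu
    have h := (((hasDerivAt_Hf lam hu).const_mul lam).mul (hasDerivAt_ccosh_lam lam u)).sub
      ((hasDerivAt_Hf' lam hu).mul (hasDerivAt_csinh_lam lam u))
    refine h.congr_deriv ?_
    symm
    linear_combination (Complex.sinh (lam * (u:ℂ))) * (Hf_ODE lam u hu)
  have hPθ : P θ = P 0 := const_on_J hPd hθJ h0J
  have hQθ : Q θ = Q 0 := const_on_J hQd hθJ h0J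
  have hzc0 : zc 0 = 0 := by
    rw [zc_eq_real]
    norm_num
  have hG0 : Gf lam (zc 0) = 1 := by
    rw [hzc0, Gf]
    rw [tsum_eq_single 0 (by intro b hb; simp [zero_pow hb])]
    simp [coefA_zero]
  have hHf0 : Hf lam 0 = 0 := by
    unfold Hf
    norm_num
  have hHf'0 : Hf' lam 0 = 0 := by
    unfold Hf'
    rw [hG0]
    norm_num
  have hP0 : P 0 = 0 := by
    rw [hPdef]
    simp only [hHf0, hHf'0]
    norm_num
  have hQ0 : Q 0 = 0 := by
    rw [hQdef]
    simp only [hHf0, hHf'0]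
    norm_num
  rw [hP0] at hPθ
  rw [hQ0] at hQθ
  have hch : Complex.cosh (lam*(θ:ℂ))^2 - Complex.sinh (lam*(θ:ℂ))^2 = 1 :=
    Complex.cosh_sq_sub_sinh_sq _
  have hP1 : Hf' lam θ * Complex.cosh (lam * (θ:ℂ))
      - lam * Hf lam θ * Complex.sinh (lam * (θ:ℂ)) = 0 := hPθ
  have hQ1 : lam * Hf lam θ * Complex.cosh (lam * (θ:ℂ))
      - Hf' lam θ * Complex.sinh (lam * (θ:ℂ)) = 0 := hQθ
  have hA : lam * Hf lam θ = 0 := by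
    linear_combination (Complex.cosh (lam*(θ:ℂ))) * hQ1 + (Complex.sinh (lam*(θ:ℂ))) * hP1
      - (lam * Hf lam θ) * hch
  have hHfθ : Hf lam θ = 0 := by
    rcases mul_eq_zero.1 hA with h | h
    · exact absurd h hlam
    · exact h
  have hkey : lam * Complex.sinh (θ:ℂ) * Gf lam (zc θ) = Complex.sinh (lam * (θ:ℂ)) := by
    have := hHfθ
    unfold Hf at this
    linear_combination this
  have hsθ : Complex.sinh (θ:ℂ) ≠ 0 := by
    rw [← Complex.ofReal_sinh, Complex.ofReal_ne_zero]
    intro h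
    apply hθ0
    have : Real.sinh θ = Real.sinh 0 := by rw [h, Real.sinh_zero]
    exact Real.sinh_injective this
  have hypF_eq : hypF (1 + lam) (1 - lam) (3 / 2) ((-(Real.sinh (θ / 2) ^ 2) : ℝ) : ℂ)
      = Gf lam (zc θ) := by
    rw [← zc_eq_real]
    rfl
  rw [hypF_eq, div_eq_iff (mul_ne_zero hlam hsθ)]
  linear_combination - hkey
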